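/- Let R = k[s,t] be a polynomial ring in two variables over a field of characteristic 0, and let p, q, r be positive integers with p + q − r ≥ 2 and p + r − q ≤ 1. Write t^q = f·s^p + g·(s+t)^r with f, g ∈ R where no term of g is divisible by s^p. Then the colon ideal I = ⟨s^p, t^q⟩ : (s+t)^r equals ⟨s^p, g⟩, and s^p and g are relatively prime (in particular I is a complete intersection generated in degrees min{p, q−r} and max{p, q−r}). -/

import Mathlib

open MvPolynomial

section Aux

variable (k : Type) [Field k]

private lemma prime_X0 : Prime (X 0 : MvPolynomial (Fin 2) k) := by
  have := MulEquiv.prime_iff (MvPolynomial.finSuccEquiv k 1).toMulEquiv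
    (p := (X 0 : MvPolynomial (Fin 2) k))
  rw [← this]
  have h0 : (MvPolynomial.finSuccEquiv k 1).toMulEquiv (X 0 : MvPolynomial (Fin 2) k)
      = Polynomial.X := MvPolynomial.finSuccEquiv_X_zero
  rw [h0]
  exact Polynomial.prime_X

/-- evaluation at s = 0 -/
noncomputable def φ : MvPolynomial (Fin 2) k →ₐ[k] Polynomial k :=
  aeval ![0, Polynomial.X]

@[simp] private lemma φ_X0 : φ k (X 0) = 0 := by simp [φ]

@[simp] private lemma φ_X1 : φ k (X 1) = Polynomial.X := by simp [φ]

private lemma not_X0_dvd {h : MvPolynomial (Fin 2) k} (hn : φ k h ≠ 0) :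
    ¬ (X 0 : MvPolynomial (Fin 2) k) ∣ h := by
  rintro ⟨c, rfl⟩
  simp at hn

end Aux

/-- In `R = k[s,t]` (char 0), with `p + q − r ≥ 2` and `p + r − q ≤ 1`, writing
`t^q = f·s^p + g·(s+t)^r` where no term of `g` is divisible by `s^p`, the colon ideal
`I = ⟨s^p, t^q⟩ : (s+t)^r` equals `⟨s^p, g⟩`, and `s^p` and `g` are relatively prime. -/
theorem stmt_7 (k : Type) [Field k] [CharZero k] (p q r : ℕ)
    (hp : 0 < p) (hq : 0 < q) (hr : 0 < r)
    (h1 : r + 2 ≤ p + q) (h2 : p + r ≤ q + 1)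
    (f g : MvPolynomial (Fin 2) k)
    (hfg : (X 1 : MvPolynomial (Fin 2) k) ^ q = f * X 0 ^ p + g * (X 0 + X 1) ^ r)
    (hgsupp : ∀ m ∈ g.support, m 0 < p) :
    (Ideal.span {(X 0 : MvPolynomial (Fin 2) k) ^ p, X 1 ^ q}).colon
        (Ideal.span {(X 0 + X 1 : MvPolynomial (Fin 2) k) ^ r}) =
      Ideal.span {(X 0 : MvPolynomial (Fin 2) k) ^ p, g} ∧
    IsRelPrime ((X 0 : MvPolynomial (Fin 2) k) ^ p) g := by
  set s : MvPolynomial (Fin 2) k := X 0 with hs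
  set t : MvPolynomial (Fin 2) k := X 1 with ht
  have hXprime : Prime s := prime_X0 k
  -- s does not divide g
  have hφg : φ k g * Polynomial.X ^ r = Polynomial.X ^ q := by
    have := congrArg (φ k) hfg
    simp only [hs, ht] at this
    simpa [zero_pow hp.ne'] using this.symm
  have hgne : φ k g ≠ 0 := by
    intro h0
    rw [h0, zero_mul] at hφg
    exact pow_ne_zero q (Polynomial.X_ne_zero (R := k)) hφg.symm
  have hsg : ¬ s ∣ g := not_X0_dvd k hgne
  -- s does not divide s + t
  have hsu : ¬ s ∣ (s + t) := by
    apply not_X0_dvd k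
    rw [hs, ht]
    simpa using Polynomial.X_ne_zero (R := k)
  have hrel_sg : IsRelPrime s g := hXprime.irreducible.isRelPrime_iff_not_dvd.mpr hsg
  have hrel_su : IsRelPrime s (s + t) := hXprime.irreducible.isRelPrime_iff_not_dvd.mpr hsu
  have hrel_pow : IsRelPrime (s ^ p) ((s + t) ^ r) := (hrel_su.pow_left).pow_right
  constructor
  · apply le_antisymm
    · intro h hh
      rw [Ideal.mem_colon_span_singleton] at hh
      rw [Ideal.mem_span_pair] at hh
      obtain ⟨a, b, hab⟩ := hh
      rw [Ideal.mem_span_pair]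
      -- h * u^r = a * s^p + b * t^q = a*s^p + b*(f*s^p + g*u^r)
      have key : (h - b * g) * (s + t) ^ r = (a + b * f) * s ^ p := by
        rw [hfg] at hab; linear_combination -hab
      have hdvd : s ^ p ∣ (h - b * g) := by
        exact hrel_pow.dvd_of_dvd_mul_right ⟨a + b * f, by linear_combination key⟩
      obtain ⟨c, hc⟩ := hdvd
      exact ⟨c, b, by linear_combination -hc⟩
    · rw [Ideal.span_le]
      rintro x (rfl | rfl)
      · rw [SetLike.mem_coe, Ideal.mem_colon_span_singleton]
        exact Ideal.mul_mem_right _ _ (Ideal.subset_span (by left; rfl))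
      · rw [SetLike.mem_coe, Ideal.mem_colon_span_singleton]
        rw [Ideal.mem_span_pair]
        exact ⟨-f, 1, by linear_combination hfg⟩
  · exact hrel_sg.pow_left
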